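/- Let ω ≠ 0 and b ∈ ℝ. Over all continuously differentiable f : [0,1] → ℝ with f(0) = 0 and f(1) = b, the infimum of ∫₀¹ [ (1/2) f′(t)² + (ω⁴/8) f(t)² ] dt equals (b² ω²/4) · (e^{ω²/2} + e^{−ω²/2})/(e^{ω²/2} − e^{−ω²/2}), and this infimum is attained at f(t) = b·(e^{t ω²/2} − e^{−t ω²/2})/(e^{ω²/2} − e^{−ω²/2}). -/

import Mathlib

open MeasureTheory Set intervalIntegral

/-- The action functional `E(f) = ∫₀¹ ((1/2) f′(t)² + (ω⁴/8) f(t)²) dt`. -/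
noncomputable def actionE (ω : ℝ) (f : ℝ → ℝ) : ℝ :=
  ∫ t in (0:ℝ)..1, ((1/2) * (deriv f t) ^ 2 + ω ^ 4 / 8 * (f t) ^ 2)

/-- The claimed minimal value. -/
noncomputable def minV (ω b : ℝ) : ℝ :=
  b ^ 2 * ω ^ 2 / 4 *
    ((Real.exp (ω ^ 2 / 2) + Real.exp (-(ω ^ 2) / 2)) /
      (Real.exp (ω ^ 2 / 2) - Real.exp (-(ω ^ 2) / 2)))

/-- The claimed minimizer. -/
noncomputable def minF (ω b : ℝ) (t : ℝ) : ℝ :=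
  b * ((Real.exp (t * ω ^ 2 / 2) - Real.exp (-(t * ω ^ 2) / 2)) /
    (Real.exp (ω ^ 2 / 2) - Real.exp (-(ω ^ 2) / 2)))


/-- auxiliary minimizer in normalized form -/
noncomputable def psiAux (c b t : ℝ) : ℝ :=
  b / (Real.exp c - Real.exp (-c)) * (Real.exp (c * t) - Real.exp (-(c * t)))

/-- derivative of `psiAux` -/
noncomputable def psiAuxD (c b t : ℝ) : ℝ :=
  b / (Real.exp c - Real.exp (-c)) * (c * Real.exp (c * t) + c * Real.exp (-(c * t)))

/-- normalized minimal value -/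
noncomputable def VAux (c b : ℝ) : ℝ :=
  b ^ 2 * c / 2 * ((Real.exp c + Real.exp (-c)) / (Real.exp c - Real.exp (-c)))

lemma hasDerivAt_psiAux (c b t : ℝ) : HasDerivAt (psiAux c b) (psiAuxD c b t) t := by
  have hu : HasDerivAt (fun x : ℝ => c * x) c t := by
    simpa using (hasDerivAt_id t).const_mul c
  have h := ((hu.exp).sub ((hu.neg).exp)).const_mul
      (b / (Real.exp c - Real.exp (-c)))
  convert h using 1
  all_goals try rfl
  unfold psiAuxD; simp only [Pi.neg_apply]; ring

lemma hasDerivAt_psiAuxD (c b t : ℝ) :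
    HasDerivAt (psiAuxD c b) (c ^ 2 * psiAux c b t) t := by
  have hu : HasDerivAt (fun x : ℝ => c * x) c t := by
    simpa using (hasDerivAt_id t).const_mul c
  have h := (((hu.exp).const_mul c).add (((hu.neg).exp).const_mul c)).const_mul
      (b / (Real.exp c - Real.exp (-c)))
  convert h using 1
  all_goals try rfl
  unfold psiAux; simp only [Pi.neg_apply]; ring

lemma psiAux_continuous (c b : ℝ) : Continuous (psiAux c b) := by
  unfold psiAux; fun_prop

lemma psiAuxD_continuous (c b : ℝ) : Continuous (psiAuxD c b) := by
  unfold psiAuxD; fun_prop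

lemma psiAux_contDiff (c b : ℝ) : ContDiff ℝ 1 (psiAux c b) := by
  unfold psiAux; fun_prop

lemma exp_sub_ne (c : ℝ) (hc : 0 < c) : Real.exp c - Real.exp (-c) ≠ 0 := by
  have : Real.exp (-c) < Real.exp c := Real.exp_lt_exp.mpr (by linarith)
  exact ne_of_gt (by linarith)

lemma integral_psiAux (c b : ℝ) (hc : 0 < c) :
    ∫ t in (0:ℝ)..1, ((1/2) * (psiAuxD c b t) ^ 2 + c ^ 2 / 2 * (psiAux c b t) ^ 2)
      = VAux c b := by
  have hD := exp_sub_ne c hc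
  set K := b ^ 2 * c / (2 * (Real.exp c - Real.exp (-c)) ^ 2) with hK
  have hA : ∀ t ∈ uIcc (0:ℝ) 1,
      HasDerivAt (fun t => K * (Real.exp (2 * (c * t)) - Real.exp (-(2 * (c * t)))))
        ((1/2) * (psiAuxD c b t) ^ 2 + c ^ 2 / 2 * (psiAux c b t) ^ 2) t := by
    intro t _
    have hu : HasDerivAt (fun x : ℝ => c * x) c t := by
      simpa using (hasDerivAt_id t).const_mul c
    have hw : HasDerivAt (fun x : ℝ => 2 * (c * x)) (2 * c) t := hu.const_mul 2
    have h := ((hw.exp).sub ((hw.neg).exp)).const_mul K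
    convert h using 1
    all_goals try rfl
    have h2 : Real.exp (2 * (c * t)) = Real.exp (c * t) ^ 2 := by
      rw [sq, ← Real.exp_add]; ring_nf
    have h2' : Real.exp (-(2 * (c * t))) = Real.exp (-(c * t)) ^ 2 := by
      rw [sq, ← Real.exp_add]; ring_nf
    unfold psiAuxD psiAux
    simp only [Pi.neg_apply]
    rw [h2, h2', hK]
    field_simp
    ring
  have hint : IntervalIntegrable
      (fun t => (1/2) * (psiAuxD c b t) ^ 2 + c ^ 2 / 2 * (psiAux c b t) ^ 2)
      volume 0 1 := by
    apply Continuous.intervalIntegrable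
    have := psiAux_continuous c b
    have := psiAuxD_continuous c b
    fun_prop
  rw [intervalIntegral.integral_eq_sub_of_hasDerivAt hA hint]
  have e1 : Real.exp (2 * c) = Real.exp c * Real.exp c := by
    rw [← Real.exp_add]; ring_nf
  have e2 : Real.exp (-(2 * c)) = Real.exp (-c) * Real.exp (-c) := by
    rw [← Real.exp_add]; ring_nf
  simp only [mul_one, mul_zero, neg_zero, Real.exp_zero, sub_self]
  rw [e1, e2, hK]
  unfold VAux
  field_simp
  ring

lemma psiAuxD_one_mul (c b : ℝ) (hc : 0 < c) : psiAuxD c b 1 * b = 2 * VAux c b := by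
  have hD := exp_sub_ne c hc
  unfold psiAuxD VAux
  rw [mul_one]
  field_simp

lemma lower_aux (c b : ℝ) (hc : 0 < c) (f : ℝ → ℝ)
    (hf : ContDiffOn ℝ 1 f (Set.Icc 0 1)) (h0 : f 0 = 0) (h1 : f 1 = b) :
    VAux c b ≤ ∫ t in (0:ℝ)..1, ((1/2) * (deriv f t) ^ 2 + c ^ 2 / 2 * (f t) ^ 2) := by
  have hD := exp_sub_ne c hc
  set f' := derivWithin f (Set.Icc 0 1) with hf'
  have hf'c : ContinuousOn f' (Set.Icc 0 1) :=
    hf.continuousOn_derivWithin (uniqueDiffOn_Icc one_pos) le_rfl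
  have hfc : ContinuousOn f (Set.Icc 0 1) := hf.continuousOn
  have hder : ∀ t ∈ Set.Ioo (0:ℝ) 1, HasDerivAt f (f' t) t := by
    intro t ht
    have hmem : Set.Icc (0:ℝ) 1 ∈ nhds t := Icc_mem_nhds ht.1 ht.2
    have hd : DifferentiableAt ℝ f t :=
      ((hf.differentiableOn one_ne_zero) t (Set.Ioo_subset_Icc_self ht)).differentiableAt hmem
    have := hd.hasDerivAt
    rwa [← hd.derivWithin ((uniqueDiffOn_Icc one_pos) t (Set.Ioo_subset_Icc_self ht))] at this
  -- replace deriv by derivWithin a.e.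
  have hAE : (∫ t in (0:ℝ)..1, ((1/2) * (deriv f t) ^ 2 + c ^ 2 / 2 * (f t) ^ 2))
      = ∫ t in (0:ℝ)..1, ((1/2) * (f' t) ^ 2 + c ^ 2 / 2 * (f t) ^ 2) := by
    apply intervalIntegral.integral_congr_ae
    have hone : ∀ᵐ t : ℝ, t ≠ (1:ℝ) := by
      rw [MeasureTheory.ae_iff]
      simp only [ne_eq, not_not, Set.setOf_eq_eq_singleton]
      exact measure_singleton 1
    filter_upwards [hone] with t ht1 htI
    rw [Set.uIoc_of_le zero_le_one] at htI
    have htIoo : t ∈ Set.Ioo (0:ℝ) 1 := ⟨htI.1, lt_of_le_of_ne htI.2 ht1⟩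
    rw [(hder t htIoo).deriv]
  rw [hAE]
  -- integrability facts
  have hIcc : Set.uIcc (0:ℝ) 1 = Set.Icc 0 1 := Set.uIcc_of_le zero_le_one
  have hint_q : IntervalIntegrable
      (fun t => (1/2) * (f' t - psiAuxD c b t) ^ 2 + c ^ 2 / 2 * (f t - psiAux c b t) ^ 2)
      volume 0 1 := by
    apply ContinuousOn.intervalIntegrable
    rw [hIcc]
    exact (((hf'c.sub (psiAuxD_continuous c b).continuousOn).pow 2).const_smul (1/2:ℝ)).add
      (((hfc.sub (psiAux_continuous c b).continuousOn).pow 2).const_smul (c^2/2))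
  have hint_cross : IntervalIntegrable
      (fun t => c ^ 2 * psiAux c b t * f t + psiAuxD c b t * f' t) volume 0 1 := by
    apply ContinuousOn.intervalIntegrable
    rw [hIcc]
    exact ((((psiAux_continuous c b).continuousOn.const_smul (c^2:ℝ)).mul hfc)).add
      ((psiAuxD_continuous c b).continuousOn.mul hf'c)
  have hint_p : IntervalIntegrable
      (fun t => (1/2) * (psiAuxD c b t) ^ 2 + c ^ 2 / 2 * (psiAux c b t) ^ 2) volume 0 1 := by
    apply Continuous.intervalIntegrable
    have := psiAux_continuous c b
    have := psiAuxD_continuous c b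
    fun_prop
  -- integration by parts / FTC for the cross term
  have hcross : (∫ t in (0:ℝ)..1, (c ^ 2 * psiAux c b t * f t + psiAuxD c b t * f' t))
      = psiAuxD c b 1 * f 1 - psiAuxD c b 0 * f 0 :=
    intervalIntegral.integral_eq_sub_of_hasDerivAt_of_le
      (f := fun t => psiAuxD c b t * f t)
      (f' := fun t => c ^ 2 * psiAux c b t * f t + psiAuxD c b t * f' t)
      zero_le_one ((psiAuxD_continuous c b).continuousOn.mul hfc)
      (fun t ht => (hasDerivAt_psiAuxD c b t).mul (hder t ht)) hint_cross
  -- pointwise decomposition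
  have hdecomp : (fun t => (1/2) * (f' t) ^ 2 + c ^ 2 / 2 * (f t) ^ 2)
      = fun t => ((1/2) * (f' t - psiAuxD c b t) ^ 2 + c ^ 2 / 2 * (f t - psiAux c b t) ^ 2)
          + ((c ^ 2 * psiAux c b t * f t + psiAuxD c b t * f' t)
            - ((1/2) * (psiAuxD c b t) ^ 2 + c ^ 2 / 2 * (psiAux c b t) ^ 2)) := by
    funext t; ring
  rw [hdecomp, intervalIntegral.integral_add hint_q (hint_cross.sub hint_p),
      intervalIntegral.integral_sub hint_cross hint_p, hcross,
      integral_psiAux c b hc]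
  have hq0 : (0:ℝ) ≤ ∫ t in (0:ℝ)..1,
      ((1/2) * (f' t - psiAuxD c b t) ^ 2 + c ^ 2 / 2 * (f t - psiAux c b t) ^ 2) := by
    apply intervalIntegral.integral_nonneg zero_le_one
    intro t _
    positivity
  have h2V := psiAuxD_one_mul c b hc
  rw [h0, h1]
  linarith

lemma minF_eq (ω b : ℝ) : minF ω b = psiAux (ω ^ 2 / 2) b := by
  funext t
  unfold minF psiAux
  rw [show t * ω ^ 2 / 2 = ω ^ 2 / 2 * t by ring,
      show -(t * ω ^ 2) / 2 = -(ω ^ 2 / 2 * t) by ring,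
      show -(ω ^ 2) / 2 = -(ω ^ 2 / 2) by ring]
  ring

lemma minV_eq (ω b : ℝ) : minV ω b = VAux (ω ^ 2 / 2) b := by
  unfold minV VAux
  rw [show -(ω ^ 2) / 2 = -(ω ^ 2 / 2) by ring]
  ring

theorem action_inf_attained (ω b : ℝ) (hω : ω ≠ 0) :
    (∀ f : ℝ → ℝ, ContDiffOn ℝ 1 f (Set.Icc 0 1) → f 0 = 0 → f 1 = b →
        minV ω b ≤ actionE ω f) ∧
    ContDiffOn ℝ 1 (minF ω b) (Set.Icc 0 1) ∧ minF ω b 0 = 0 ∧ minF ω b 1 = b ∧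
    actionE ω (minF ω b) = minV ω b := by
  have hc : 0 < ω ^ 2 / 2 := by positivity
  have h48 : ω ^ 4 / 8 = (ω ^ 2 / 2) ^ 2 / 2 := by ring
  refine ⟨?_, ?_, ?_, ?_, ?_⟩
  · intro f hf h0 h1
    rw [minV_eq]
    unfold actionE
    rw [h48]
    exact lower_aux (ω ^ 2 / 2) b hc f hf h0 h1
  · rw [minF_eq]
    exact (psiAux_contDiff _ b).contDiffOn
  · simp [minF]
  · have hne : Real.exp (ω ^ 2 / 2) - Real.exp (-(ω ^ 2) / 2) ≠ 0 := by
      have : Real.exp (-(ω ^ 2) / 2) < Real.exp (ω ^ 2 / 2) :=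
        Real.exp_lt_exp.mpr (by nlinarith)
      exact ne_of_gt (by linarith)
    unfold minF
    rw [one_mul, div_self hne, mul_one]
  · rw [minF_eq, minV_eq]
    unfold actionE
    have hd : deriv (psiAux (ω ^ 2 / 2) b) = psiAuxD (ω ^ 2 / 2) b :=
      funext fun t => (hasDerivAt_psiAux _ b t).deriv
    rw [hd, h48]
    exact integral_psiAux _ b hc
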